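/- (Singular Gronwall inequality, monotone version) Let T ∈ (0, ∞], L ≥ 0 and 0 < β < 1. Let a and f be nonnegative functions on [0, T) that are locally integrable, with a nondecreasing on [0, T), and suppose that f(t) ≤ a(t) + L · ∫₀ᵗ (t − s)^(−β) f(s) ds for all t ∈ [0, T). Then for all t ∈ [0, T), f(t) ≤ a(t) · E_{1−β}(L · Γ(1 − β) · t^(1−β)), where E_ρ denotes the Mittag-Leffler function E_ρ(x) = Σ_{n=0}^∞ xⁿ / Γ(nρ + 1). -/

import Mathlib

open MeasureTheory Real Set Filter
open scoped ENNReal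

lemma complex_beta_eq {p q : ℝ} (x : ℝ) (hx0 : 0 ≤ x) (hx1 : x ≤ 1) :
    (x:ℂ) ^ ((p:ℂ) - 1) * (1 - (x:ℂ)) ^ ((q:ℂ) - 1)
      = ((x ^ (p-1) * (1-x) ^ (q-1) : ℝ) : ℂ) := by
  rw [show ((p:ℂ) - 1) = ((p - 1 : ℝ) : ℂ) by push_cast; ring,
    show ((q:ℂ) - 1) = ((q - 1 : ℝ) : ℂ) by push_cast; ring,
    show (1 - (x:ℂ)) = ((1 - x : ℝ) : ℂ) by push_cast; ring,
    ← Complex.ofReal_cpow hx0, ← Complex.ofReal_cpow (by linarith : (0:ℝ) ≤ 1 - x),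
    ← Complex.ofReal_mul]

lemma real_beta_integrable {p q : ℝ} (hp : 0 < p) (hq : 0 < q) :
    IntervalIntegrable (fun x : ℝ => x ^ (p-1) * (1-x) ^ (q-1)) volume 0 1 := by
  have h := Complex.betaIntegral_convergent (u := p) (v := q) (by simpa) (by simpa)
  rw [intervalIntegrable_iff] at h ⊢
  refine (h.re).congr ?_
  filter_upwards [self_mem_ae_restrict measurableSet_uIoc] with x hx
  rw [Set.uIoc_of_le (by norm_num : (0:ℝ) ≤ 1)] at hx
  simp only [RCLike.re_to_complex]
  rw [complex_beta_eq x hx.1.le hx.2, Complex.ofReal_re]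

lemma real_beta_value {p q : ℝ} (hp : 0 < p) (hq : 0 < q) :
    ∫ x in (0:ℝ)..1, x ^ (p-1) * (1-x) ^ (q-1)
      = Real.Gamma p * Real.Gamma q / Real.Gamma (p+q) := by
  have h := Complex.Gamma_mul_Gamma_eq_betaIntegral (s := p) (t := q) (by simpa) (by simpa)
  have hB : Complex.betaIntegral p q
      = ((∫ x in (0:ℝ)..1, x ^ (p-1) * (1-x) ^ (q-1) : ℝ) : ℂ) := by
    rw [Complex.betaIntegral, ← intervalIntegral.integral_ofReal]
    refine intervalIntegral.integral_congr ?_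
    intro x hx
    rw [Set.uIcc_of_le (by norm_num : (0:ℝ) ≤ 1)] at hx
    exact complex_beta_eq x hx.1 hx.2
  rw [hB, show ((p:ℂ)+(q:ℂ)) = ((p+q:ℝ):ℂ) by push_cast; ring, Complex.Gamma_ofReal,
    Complex.Gamma_ofReal, Complex.Gamma_ofReal, ← Complex.ofReal_mul, ← Complex.ofReal_mul] at h
  have h3 : Real.Gamma p * Real.Gamma q
      = Real.Gamma (p+q) * ∫ x in (0:ℝ)..1, x ^ (p-1) * (1-x) ^ (q-1) := by exact_mod_cast h
  have hg : Real.Gamma (p+q) ≠ 0 := (Real.Gamma_pos_of_pos (by linarith)).ne'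
  field_simp
  linarith [h3]


lemma beta_shift_eq {p q d : ℝ} (hd : 0 < d) {x : ℝ} (h0 : 0 ≤ x) (h1 : x ≤ 1) :
    (d^(p-1) * d^(q-1)) * (x^(q-1) * (1-x)^(p-1)) = (d*(1-x))^(p-1) * (d*x)^(q-1) := by
  rw [Real.mul_rpow hd.le (by linarith), Real.mul_rpow hd.le h0]; ring

lemma beta_shift_eq' {p q u t : ℝ} (hut : u < t) {s : ℝ} (h1 : u ≤ s) (h2 : s ≤ t) :
    ((t-u)^(p-1) * (t-u)^(q-1)) * (((s-u)/(t-u))^(q-1) * (1-((s-u)/(t-u)))^(p-1))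
      = (t-s)^(p-1) * (s-u)^(q-1) := by
  have hd : (0:ℝ) < t - u := by linarith
  rw [beta_shift_eq hd (div_nonneg (by linarith) hd.le)
    (by rw [div_le_one hd]; linarith)]
  rw [show (t-u) * (1 - (s-u)/(t-u)) = t - s by field_simp; ring,
    show (t-u) * ((s-u)/(t-u)) = s - u by field_simp]

lemma beta_interval_integrable {p q u t : ℝ} (hp : 0 < p) (hq : 0 < q) (hut : u < t) :
    IntervalIntegrable (fun s : ℝ => (t-s)^(p-1) * (s-u)^(q-1)) volume u t := by
  have hd : (0:ℝ) < t - u := by linarith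
  have h0 := (real_beta_integrable hq hp).const_mul ((t-u)^(p-1) * (t-u)^(q-1))
  have h1 := h0.comp_mul_right (c := (t-u)⁻¹)
  have h2 := h1.comp_sub_right u
  rw [show (0:ℝ)/(t-u)⁻¹ + u = u by field_simp; ring,
    show (1:ℝ)/(t-u)⁻¹ + u = t by field_simp; ring] at h2
  rw [intervalIntegrable_iff] at h2 ⊢
  refine h2.congr ?_
  filter_upwards [self_mem_ae_restrict measurableSet_uIoc] with s hs
  rw [Set.uIoc_of_le hut.le] at hs
  have := beta_shift_eq' hut hs.1.le hs.2 (p := p) (q := q)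
  simp only [div_eq_mul_inv] at this ⊢
  exact this

lemma beta_interval_value {p q u t : ℝ} (hp : 0 < p) (hq : 0 < q) (hut : u < t) :
    ∫ s in u..t, (t-s)^(p-1) * (s-u)^(q-1)
      = (t-u)^(p+q-1) * (Real.Gamma p * Real.Gamma q / Real.Gamma (p+q)) := by
  have hd : (0:ℝ) < t - u := by linarith
  have key := intervalIntegral.integral_comp_mul_add
    (f := fun s : ℝ => (t-s)^(p-1) * (s-u)^(q-1)) (a := 0) (b := 1) hd.ne' u
  rw [mul_zero, zero_add, mul_one, show (t-u) + u = t by ring] at key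
  have congr1 : ∫ x in (0:ℝ)..1, (t - ((t-u)*x + u))^(p-1) * ((t-u)*x + u - u)^(q-1)
      = ((t-u)^(p-1) * (t-u)^(q-1)) * ∫ x in (0:ℝ)..1, x ^ (q-1) * (1-x) ^ (p-1) := by
    rw [← intervalIntegral.integral_const_mul]
    refine intervalIntegral.integral_congr ?_
    intro x hx
    rw [Set.uIcc_of_le (by norm_num : (0:ℝ) ≤ 1)] at hx
    show (t - ((t-u)*x + u))^(p-1) * ((t-u)*x + u - u)^(q-1)
      = (t-u)^(p-1) * (t-u)^(q-1) * (x^(q-1) * (1-x)^(p-1))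
    rw [show t - ((t-u)*x+u) = (t-u)*(1-x) by ring, show (t-u)*x+u-u = (t-u)*x by ring]
    rw [← beta_shift_eq (p := p) (q := q) hd hx.1 hx.2]
  rw [congr1, real_beta_value hq hp, smul_eq_mul] at key
  have h4 : ∫ s in u..t, (t-s)^(p-1) * (s-u)^(q-1)
      = (t-u) * ((t-u)^(p-1) * (t-u)^(q-1) * (Real.Gamma q * Real.Gamma p / Real.Gamma (q+p))) := by
    rw [key]; field_simp
  rw [h4, show Real.Gamma (q+p) = Real.Gamma (p+q) by rw [add_comm]]
  have h5 : (t-u) * ((t-u)^(p-1) * (t-u)^(q-1)) = (t-u)^(p+q-1) := by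
    rw [← Real.rpow_add hd]
    nth_rewrite 1 [← Real.rpow_one (t-u)]
    rw [← Real.rpow_add hd]
    congr 1; ring
  calc (t-u) * ((t-u)^(p-1) * (t-u)^(q-1) * (Real.Gamma q * Real.Gamma p / Real.Gamma (p+q)))
      = (t-u) * ((t-u)^(p-1) * (t-u)^(q-1)) * (Real.Gamma p * Real.Gamma q / Real.Gamma (p+q)) := by ring
    _ = _ := by rw [h5]


lemma ofReal_integral_le_lintegral {α : Type*} [MeasurableSpace α] (μ : Measure α) (g : α → ℝ) :
    ENNReal.ofReal (∫ x, g x ∂μ) ≤ ∫⁻ x, ENNReal.ofReal (g x) ∂μ := by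
  by_cases hg : Integrable g μ
  · have hfin : (∫⁻ x, ENNReal.ofReal (g x) ∂μ) < ⊤ := by
      refine lt_of_le_of_lt (lintegral_mono fun x => ?_) hg.hasFiniteIntegral
      rw [← ofReal_norm]
      exact ENNReal.ofReal_le_ofReal (le_abs_self _)
    rw [integral_eq_lintegral_pos_part_sub_lintegral_neg_part hg]
    calc ENNReal.ofReal ((∫⁻ x, ENNReal.ofReal (g x) ∂μ).toReal
          - (∫⁻ x, ENNReal.ofReal (-g x) ∂μ).toReal)
        ≤ ENNReal.ofReal ((∫⁻ x, ENNReal.ofReal (g x) ∂μ).toReal) :=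
          ENNReal.ofReal_le_ofReal (by simp [ENNReal.toReal_nonneg])
      _ = ∫⁻ x, ENNReal.ofReal (g x) ∂μ := ENNReal.ofReal_toReal hfin.ne
  · rw [integral_undef hg]; simp

lemma lintegral_beta {p q u t : ℝ} (hp : 0 < p) (hq : 0 < q) (hut : u < t) :
    ∫⁻ s in Set.Ioo u t, ENNReal.ofReal ((t-s)^(p-1) * (s-u)^(q-1))
      = ENNReal.ofReal ((t-u)^(p+q-1) * (Real.Gamma p * Real.Gamma q / Real.Gamma (p+q))) := by
  rw [← beta_interval_value hp hq hut, intervalIntegral.integral_of_le hut.le,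
    integral_Ioc_eq_integral_Ioo]
  refine (ofReal_integral_eq_lintegral_ofReal
    (((beta_interval_integrable hp hq hut).1).mono_set Set.Ioo_subset_Ioc_self) ?_).symm
  filter_upwards [self_mem_ae_restrict measurableSet_Ioo] with s hs
  exact mul_nonneg (Real.rpow_nonneg (by linarith [hs.2]) _)
    (Real.rpow_nonneg (by linarith [hs.1]) _)

lemma lintegral_pow_kernel {p t : ℝ} (hp : 0 < p) (ht : 0 < t) :
    ∫⁻ s in Set.Ioo 0 t, ENNReal.ofReal ((t-s)^(p-1)) = ENNReal.ofReal (t^p / p) := by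
  have hval : ∫ s in (0:ℝ)..t, (t-s)^(p-1) = t^p / p := by
    rw [show (fun s : ℝ => (t-s)^(p-1)) = (fun s : ℝ => ((t - s))^(p-1)) from rfl]
    rw [intervalIntegral.integral_comp_sub_left (fun x : ℝ => x^(p-1)) t]
    simp only [sub_self, sub_zero]
    rw [integral_rpow (Or.inl (by linarith))]
    rw [show p - 1 + 1 = p by ring, Real.zero_rpow (by linarith : p ≠ 0)]
    norm_num
  have hint : IntervalIntegrable (fun s : ℝ => (t-s)^(p-1)) volume 0 t := by
    have := (intervalIntegral.intervalIntegrable_rpow' (a := 0) (b := t) (r := p-1) (by linarith)).comp_sub_left t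
    simpa using this.symm
  rw [← hval, intervalIntegral.integral_of_le ht.le, integral_Ioc_eq_integral_Ioo]
  refine (ofReal_integral_eq_lintegral_ofReal (hint.1.mono_set Set.Ioo_subset_Ioc_self) ?_).symm
  filter_upwards [self_mem_ae_restrict measurableSet_Ioo] with s hs
  exact Real.rpow_nonneg (by linarith [hs.2]) _


lemma summable_div_factorial_div {x : ℝ} (hx : 1 ≤ x) (k : ℕ) (hk : 0 < k) :
    Summable (fun n : ℕ => x ^ n / (Nat.factorial (n / k))) := by
  haveI : NeZero k := ⟨hk.ne'⟩
  have hx0 : (0:ℝ) ≤ x := by linarith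
  have key : Summable (fun p : ℕ × Fin k => x ^ (p.1 * k + (p.2:ℕ)) / (Nat.factorial p.1)) := by
    refine (summable_prod_of_nonneg ?_).2 ⟨fun m => Summable.of_finite, ?_⟩
    · intro p
      exact div_nonneg (pow_nonneg hx0 _) (by positivity)
    · refine Summable.of_nonneg_of_le (fun m => ?_) (fun m => ?_)
        (((Real.summable_pow_div_factorial (x^k)).mul_left ((k:ℝ) * x^k)))
      · exact tsum_nonneg fun j => div_nonneg (pow_nonneg hx0 _) (by positivity)
      · rw [tsum_fintype]
        have hbound : ∀ j : Fin k, x ^ (m * k + (j:ℕ)) / (Nat.factorial m)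
            ≤ x ^ (m * k + k) / (Nat.factorial m) := by
          intro j
          apply div_le_div_of_nonneg_right ?_ ?_ |>.trans_eq rfl
          · exact pow_le_pow_right₀ hx (by omega)
          · positivity
        calc (∑ j : Fin k, x ^ (m * k + (j:ℕ)) / (Nat.factorial m))
            ≤ ∑ _j : Fin k, x ^ (m * k + k) / (Nat.factorial m) :=
              Finset.sum_le_sum fun j _ => hbound j
          _ = (k:ℝ) * (x ^ (m * k + k) / (Nat.factorial m)) := by
              rw [Finset.sum_const]; simp [mul_comm]
          _ = (k:ℝ) * x ^ k * ((x ^ k) ^ m / (Nat.factorial m)) := by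
              rw [pow_add, ← pow_mul, mul_comm k m]; ring
  have h2 : Summable ((fun n : ℕ => x ^ n / (Nat.factorial (n / k))) ∘ (Nat.divModEquiv k).symm) := by
    refine key.congr fun p => ?_
    have hlt := p.2.isLt
    simp only [Function.comp, Nat.divModEquiv_symm_apply]
    have : (p.1 * k + (p.2:ℕ)) / k = p.1 := by
      rw [mul_comm, Nat.mul_add_div hk, Nat.div_eq_of_lt hlt, add_zero]
    rw [this]
  exact (Equiv.summable_iff (Nat.divModEquiv k).symm).1 h2

lemma Gamma_ge_exp_neg_one {y : ℝ} (hy : 1 ≤ y) : Real.exp (-1) ≤ Real.Gamma y := by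
  have hy0 : 0 < y := by linarith
  rw [Real.Gamma_eq_integral hy0]
  have h1 : ∫ x in Ioi (1:ℝ), Real.exp (-x) ≤ ∫ x in Ioi (1:ℝ), Real.exp (-x) * x ^ (y-1) := by
    have hexp : IntegrableOn (fun x : ℝ => Real.exp (-x)) (Ioi 1) := by
      simpa using exp_neg_integrableOn_Ioi 1 one_pos
    refine setIntegral_mono_on hexp
      ((Real.GammaIntegral_convergent hy0).mono_set (fun x hx => mem_Ioi.2 (lt_trans one_pos (mem_Ioi.1 hx))))
      measurableSet_Ioi (fun x hx => ?_)
    have hx1 : (1:ℝ) ≤ x := le_of_lt hx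
    nth_rewrite 1 [← mul_one (Real.exp (-x))]
    exact mul_le_mul_of_nonneg_left (Real.one_le_rpow hx1 (by linarith)) (Real.exp_nonneg _)
  have h2 : ∫ x in Ioi (1:ℝ), Real.exp (-x) * x ^ (y-1)
      ≤ ∫ x in Ioi (0:ℝ), Real.exp (-x) * x ^ (y-1) := by
    refine setIntegral_mono_set (Real.GammaIntegral_convergent hy0) ?_ ?_
    · filter_upwards [self_mem_ae_restrict measurableSet_Ioi] with x hx
      exact mul_nonneg (Real.exp_nonneg _) (Real.rpow_nonneg (le_of_lt hx) _)
    · exact HasSubset.Subset.eventuallyLE (fun x hx => mem_Ioi.2 (lt_trans one_pos (mem_Ioi.1 hx)))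
  calc Real.exp (-1) = ∫ x in Ioi (1:ℝ), Real.exp (-x) := (integral_exp_neg_Ioi 1).symm
    _ ≤ _ := le_trans h1 h2

lemma Gamma_ge_factorial {m : ℕ} {y : ℝ} (hy : (m:ℝ) + 1 ≤ y) :
    Real.exp (-1) * (Nat.factorial m) ≤ Real.Gamma y := by
  rcases Nat.eq_zero_or_pos m with hm | hm
  · subst hm
    simpa using Gamma_ge_exp_neg_one (by simpa using hy)
  · have h2 : (2:ℝ) ≤ (m:ℝ) + 1 := by
      have : (1:ℝ) ≤ (m:ℝ) := by exact_mod_cast hm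
      linarith
    have hmono := Real.Gamma_strictMonoOn_Ici.monotoneOn
      (Set.mem_Ici.2 h2) (Set.mem_Ici.2 (le_trans h2 hy)) hy
    rw [Real.Gamma_nat_eq_factorial] at hmono
    calc Real.exp (-1) * (Nat.factorial m) ≤ 1 * (Nat.factorial m) := by
          apply mul_le_mul_of_nonneg_right _ (by positivity)
          rw [Real.exp_le_one_iff]; linarith
      _ = (Nat.factorial m : ℝ) := one_mul _
      _ ≤ Real.Gamma y := hmono

lemma summable_ML {ρ : ℝ} (hρ0 : 0 < ρ) (x : ℝ) (hx : 0 ≤ x) :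
    Summable (fun n : ℕ => x ^ n / Real.Gamma ((n:ℝ) * ρ + 1)) := by
  set k : ℕ := ⌈1/ρ⌉₊ with hk_def
  have hk : 0 < k := Nat.ceil_pos.2 (by positivity)
  have hρk : 1/ρ ≤ (k:ℝ) := Nat.le_ceil _
  have hkR : (0:ℝ) < (k:ℝ) := by exact_mod_cast hk
  have h1k : 1 ≤ (k:ℝ) * ρ := (div_le_iff₀ hρ0).1 hρk
  have hinvk : 1/(k:ℝ) ≤ ρ := by
    rw [div_le_iff₀ hkR]; nlinarith
  set y : ℝ := max x 1 with hy_def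
  have hy1 : 1 ≤ y := le_max_right _ _
  have hy0 : 0 ≤ y := by linarith
  refine Summable.of_nonneg_of_le (fun n => ?_) (fun n => ?_)
    ((summable_div_factorial_div hy1 k hk).mul_left (Real.exp 1))
  · have := Real.Gamma_pos_of_pos (show (0:ℝ) < (n:ℝ) * ρ + 1 by positivity)
    positivity
  · have hfloor : ((n / k : ℕ) : ℝ) + 1 ≤ (n:ℝ) * ρ + 1 := by
      have h1 : ((n / k : ℕ) : ℝ) ≤ (n:ℝ) / (k:ℝ) := Nat.cast_div_le
      have h2 : (n:ℝ) / (k:ℝ) ≤ (n:ℝ) * ρ := by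
        rw [div_eq_mul_inv, ← one_div]
        exact mul_le_mul_of_nonneg_left hinvk (Nat.cast_nonneg _)
      linarith
    have hG := Gamma_ge_factorial hfloor
    have hGpos := Real.Gamma_pos_of_pos (show (0:ℝ) < (n:ℝ) * ρ + 1 by positivity)
    have hfac : (0:ℝ) < Real.exp (-1) * (Nat.factorial (n/k)) := by positivity
    calc x ^ n / Real.Gamma ((n:ℝ) * ρ + 1)
        ≤ y ^ n / (Real.exp (-1) * (Nat.factorial (n/k))) := by
          apply div_le_div₀ (pow_nonneg hy0 _) (pow_le_pow_left₀ hx (le_max_left _ _) _) hfac hG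
      _ = Real.exp 1 * (y ^ n / (Nat.factorial (n/k))) := by
          rw [Real.exp_neg]; field_simp


lemma core_step {t p ρ β L : ℝ} (ht : 0 < t) (hp : 0 < p) (hρ0 : 0 < ρ)
    (hρβ : ρ - 1 = -β) (hL : 0 ≤ L) {a f : ℝ → ℝ}
    (hfm : AEMeasurable f (volume.restrict (Set.Ioo 0 t)))
    (ham : AEMeasurable a (volume.restrict (Set.Ioo 0 t)))
    (hf_nonneg : ∀ s ∈ Set.Ioo 0 t, 0 ≤ f s)
    (ha_t : ∀ s ∈ Set.Ioo 0 t, a s ≤ a t) (hat : 0 ≤ a t)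
    (hyp : ∀ s ∈ Set.Ioo 0 t, f s ≤ a s + L * ∫ u in (0:ℝ)..s, (s - u) ^ (-β) * f u) :
    ∫⁻ s in Set.Ioo 0 t, ENNReal.ofReal ((t-s)^(p-1)) * ENNReal.ofReal (f s)
      ≤ ENNReal.ofReal (a t * (t^p / p))
        + ENNReal.ofReal (L * (Real.Gamma p * Real.Gamma ρ / Real.Gamma (p + ρ)))
          * ∫⁻ s in Set.Ioo 0 t, ENNReal.ofReal ((t-s)^(p+ρ-1)) * ENNReal.ofReal (f s) := by
  set A : Set ℝ := Set.Ioo 0 t with hA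
  set B : ℝ := Real.Gamma p * Real.Gamma ρ / Real.Gamma (p + ρ) with hB
  have hBpos : 0 < B := by
    have := Real.Gamma_pos_of_pos hp
    have := Real.Gamma_pos_of_pos hρ0
    have := Real.Gamma_pos_of_pos (by linarith : 0 < p + ρ)
    positivity
  -- the inner lintegral
  set J : ℝ → ℝ≥0∞ := fun s =>
    ∫⁻ u in Set.Ioo 0 s, ENNReal.ofReal ((s-u)^(ρ-1)) * ENNReal.ofReal (f u) with hJ
  -- pointwise bound
  have point : ∀ s ∈ A, ENNReal.ofReal ((t-s)^(p-1)) * ENNReal.ofReal (f s)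
      ≤ ENNReal.ofReal ((t-s)^(p-1)) * ENNReal.ofReal (a s)
        + ENNReal.ofReal ((t-s)^(p-1)) * (ENNReal.ofReal L * J s) := by
    intro s hs
    have h1 : ENNReal.ofReal (f s) ≤ ENNReal.ofReal (a s) + ENNReal.ofReal L * J s := by
      have hIneq := hyp s hs
      have step1 : ENNReal.ofReal (f s)
          ≤ ENNReal.ofReal (a s)
            + ENNReal.ofReal (L * ∫ u in (0:ℝ)..s, (s - u) ^ (-β) * f u) :=
        le_trans (ENNReal.ofReal_le_ofReal hIneq) (ENNReal.ofReal_add_le)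
      refine step1.trans (add_le_add_right ?_ _)
      rw [ENNReal.ofReal_mul hL]
      refine mul_le_mul_right ?_ _
      rw [intervalIntegral.integral_of_le hs.1.le, MeasureTheory.integral_Ioc_eq_integral_Ioo]
      refine (ofReal_integral_le_lintegral _ _).trans_eq ?_
      refine lintegral_congr_ae ?_
      filter_upwards [self_mem_ae_restrict measurableSet_Ioo] with u hu
      rw [show -β = ρ - 1 from hρβ.symm ▸ rfl]
      rw [ENNReal.ofReal_mul (Real.rpow_nonneg (by linarith [hu.2]) _)]
    calc ENNReal.ofReal ((t-s)^(p-1)) * ENNReal.ofReal (f s)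
        ≤ ENNReal.ofReal ((t-s)^(p-1)) * (ENNReal.ofReal (a s) + ENNReal.ofReal L * J s) :=
          mul_le_mul_right h1 _
      _ = _ := by rw [mul_add]
  -- split the integral
  have hker1 : Measurable fun s : ℝ => ENNReal.ofReal ((t-s)^(p-1)) :=
    ((measurable_const.sub measurable_id).pow measurable_const).ennreal_ofReal
  have step2 : ∫⁻ s in A, ENNReal.ofReal ((t-s)^(p-1)) * ENNReal.ofReal (f s)
      ≤ (∫⁻ s in A, ENNReal.ofReal ((t-s)^(p-1)) * ENNReal.ofReal (a s))
        + ∫⁻ s in A, ENNReal.ofReal ((t-s)^(p-1)) * (ENNReal.ofReal L * J s) := by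
    calc ∫⁻ s in A, ENNReal.ofReal ((t-s)^(p-1)) * ENNReal.ofReal (f s)
        ≤ ∫⁻ s in A, (ENNReal.ofReal ((t-s)^(p-1)) * ENNReal.ofReal (a s)
            + ENNReal.ofReal ((t-s)^(p-1)) * (ENNReal.ofReal L * J s)) := by
          refine lintegral_mono_ae ?_
          filter_upwards [self_mem_ae_restrict measurableSet_Ioo] with s hs
          exact point s hs
      _ = _ := lintegral_add_left' ((hker1.aemeasurable).mul ham.ennreal_ofReal) _
  -- first term
  have hT1 : ∫⁻ s in A, ENNReal.ofReal ((t-s)^(p-1)) * ENNReal.ofReal (a s)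
      ≤ ENNReal.ofReal (a t * (t^p / p)) := by
    calc ∫⁻ s in A, ENNReal.ofReal ((t-s)^(p-1)) * ENNReal.ofReal (a s)
        ≤ ∫⁻ s in A, ENNReal.ofReal ((t-s)^(p-1)) * ENNReal.ofReal (a t) := by
          refine lintegral_mono_ae ?_
          filter_upwards [self_mem_ae_restrict measurableSet_Ioo] with s hs
          exact mul_le_mul_right (ENNReal.ofReal_le_ofReal (ha_t s hs)) _
      _ = (∫⁻ s in A, ENNReal.ofReal ((t-s)^(p-1))) * ENNReal.ofReal (a t) :=
          lintegral_mul_const'' _ hker1.aemeasurable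
      _ = ENNReal.ofReal (t^p/p) * ENNReal.ofReal (a t) := by rw [lintegral_pow_kernel hp ht]
      _ = ENNReal.ofReal (a t * (t^p / p)) := by
          rw [mul_comm, ← ENNReal.ofReal_mul hat]
  -- second term via Tonelli
  set F : ℝ × ℝ → ℝ≥0∞ := fun z =>
    ENNReal.ofReal ((t - z.1)^(p-1)) * (ENNReal.ofReal L *
      ({q : ℝ × ℝ | q.2 < q.1}.indicator
        (fun q => ENNReal.ofReal ((q.1 - q.2)^(ρ-1)) * ENNReal.ofReal (f q.2)) z)) with hF
  have hFmeas : AEMeasurable (Function.uncurry fun s u => F (s, u))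
      ((volume.restrict A).prod (volume.restrict A)) := by
    have k1 : Measurable fun z : ℝ × ℝ => ENNReal.ofReal ((t - z.1)^(p-1)) :=
      ((measurable_const.sub measurable_fst).pow measurable_const).ennreal_ofReal
    have k2 : Measurable fun z : ℝ × ℝ => ENNReal.ofReal ((z.1 - z.2)^(ρ-1)) :=
      ((measurable_fst.sub measurable_snd).pow measurable_const).ennreal_ofReal
    have k3 : AEMeasurable (fun z : ℝ × ℝ => ENNReal.ofReal (f z.2))
        ((volume.restrict A).prod (volume.restrict A)) :=
      (hfm.ennreal_ofReal).comp_quasiMeasurePreserving Measure.quasiMeasurePreserving_snd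
    have : Function.uncurry (fun s u => F (s, u)) = F := by
      ext z; simp [Function.uncurry]
    rw [this]
    exact (k1.aemeasurable).mul (aemeasurable_const.mul
      ((k2.aemeasurable.mul k3).indicator (measurableSet_lt measurable_snd measurable_fst)))
  have hJs : ∀ s ∈ A, ENNReal.ofReal ((t-s)^(p-1)) * (ENNReal.ofReal L * J s)
      = ∫⁻ u in A, F (s, u) := by
    intro s hs
    have e1 : Set.Iio s ∩ A = Set.Ioo 0 s := by
      rw [hA]; ext u
      simp only [Set.mem_inter_iff, Set.mem_Iio, Set.mem_Ioo]
      constructor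
      · rintro ⟨h1, h2, _⟩; exact ⟨h2, h1⟩
      · rintro ⟨h1, h2⟩; exact ⟨h2, h1, h2.trans (lt_of_lt_of_le hs.2 le_rfl)⟩
    have hJ2 : J s = ∫⁻ u in A, (Set.Iio s).indicator
        (fun u => ENNReal.ofReal ((s-u)^(ρ-1)) * ENNReal.ofReal (f u)) u := by
      rw [lintegral_indicator measurableSet_Iio,
        Measure.restrict_restrict measurableSet_Iio, e1]
    rw [hJ2, ← lintegral_const_mul' _ _ ENNReal.ofReal_ne_top,
      ← lintegral_const_mul' _ _ ENNReal.ofReal_ne_top]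
    refine lintegral_congr fun u => ?_
    by_cases hus : u < s
    · rw [Set.indicator_of_mem (Set.mem_Iio.2 hus),
        show F (s, u) = ENNReal.ofReal ((t - s)^(p-1)) * (ENNReal.ofReal L *
          ({q : ℝ × ℝ | q.2 < q.1}.indicator
            (fun q => ENNReal.ofReal ((q.1 - q.2)^(ρ-1)) * ENNReal.ofReal (f q.2)) (s, u))) from rfl,
        Set.indicator_of_mem (by exact hus : (s, u) ∈ {q : ℝ × ℝ | q.2 < q.1})]
    · rw [Set.indicator_of_notMem (by simpa using hus),
        show F (s, u) = ENNReal.ofReal ((t - s)^(p-1)) * (ENNReal.ofReal L *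
          ({q : ℝ × ℝ | q.2 < q.1}.indicator
            (fun q => ENNReal.ofReal ((q.1 - q.2)^(ρ-1)) * ENNReal.ofReal (f q.2)) (s, u))) from rfl,
        Set.indicator_of_notMem (by simpa using hus)]
  have hswap : ∫⁻ s in A, ∫⁻ u in A, F (s, u) = ∫⁻ u in A, ∫⁻ s in A, F (s, u) :=
    lintegral_lintegral_swap hFmeas
  have hinner : ∀ u ∈ A, (∫⁻ s in A, F (s, u))
      = ENNReal.ofReal L * ENNReal.ofReal (f u) * ENNReal.ofReal ((t-u)^(p+ρ-1) * B) := by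
    intro u hu
    have e2 : Set.Ioi u ∩ A = Set.Ioo u t := by
      rw [hA]; ext s
      simp only [Set.mem_inter_iff, Set.mem_Ioi, Set.mem_Ioo]
      constructor
      · rintro ⟨h1, _, h3⟩; exact ⟨h1, h3⟩
      · rintro ⟨h1, h2⟩; exact ⟨h1, hu.1.trans h1, h2⟩
    calc ∫⁻ s in A, F (s, u)
        = ∫⁻ s in A, (Set.Ioi u).indicator (fun s =>
            (ENNReal.ofReal L * ENNReal.ofReal (f u))
              * ENNReal.ofReal ((t-s)^(p-1) * (s-u)^(ρ-1))) s := by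
          refine lintegral_congr_ae ?_
          filter_upwards [self_mem_ae_restrict measurableSet_Ioo] with s hs
          by_cases hus : u < s
          · rw [Set.indicator_of_mem (Set.mem_Ioi.2 hus),
              show F (s, u) = ENNReal.ofReal ((t - s)^(p-1)) * (ENNReal.ofReal L *
                ({q : ℝ × ℝ | q.2 < q.1}.indicator
                  (fun q => ENNReal.ofReal ((q.1 - q.2)^(ρ-1)) * ENNReal.ofReal (f q.2)) (s, u))) from rfl,
              Set.indicator_of_mem (by exact hus : (s, u) ∈ {q : ℝ × ℝ | q.2 < q.1}),
              ENNReal.ofReal_mul (Real.rpow_nonneg (by linarith [hs.2]) _)]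
            ring
          · rw [Set.indicator_of_notMem (by simpa using hus),
              show F (s, u) = ENNReal.ofReal ((t - s)^(p-1)) * (ENNReal.ofReal L *
                ({q : ℝ × ℝ | q.2 < q.1}.indicator
                  (fun q => ENNReal.ofReal ((q.1 - q.2)^(ρ-1)) * ENNReal.ofReal (f q.2)) (s, u))) from rfl,
              Set.indicator_of_notMem (by simpa using hus)]
            simp
      _ = ∫⁻ s in Set.Ioo u t, (ENNReal.ofReal L * ENNReal.ofReal (f u))
            * ENNReal.ofReal ((t-s)^(p-1) * (s-u)^(ρ-1)) := by
          rw [lintegral_indicator measurableSet_Ioi,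
            Measure.restrict_restrict measurableSet_Ioi, e2]
      _ = (ENNReal.ofReal L * ENNReal.ofReal (f u))
            * ∫⁻ s in Set.Ioo u t, ENNReal.ofReal ((t-s)^(p-1) * (s-u)^(ρ-1)) :=
          lintegral_const_mul' _ _ (by
            exact ENNReal.mul_ne_top ENNReal.ofReal_ne_top ENNReal.ofReal_ne_top)
      _ = _ := by rw [lintegral_beta hp hρ0 hu.2]
  have houter : ∫⁻ u in A,
        ENNReal.ofReal L * ENNReal.ofReal (f u) * ENNReal.ofReal ((t-u)^(p+ρ-1) * B)
      = ENNReal.ofReal (L * B)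
          * ∫⁻ u in A, ENNReal.ofReal ((t-u)^(p+ρ-1)) * ENNReal.ofReal (f u) := by
    rw [← lintegral_const_mul' _ _ ENNReal.ofReal_ne_top]
    refine lintegral_congr_ae ?_
    filter_upwards [self_mem_ae_restrict measurableSet_Ioo] with u hu
    rw [ENNReal.ofReal_mul (Real.rpow_nonneg (by linarith [hu.2]) _),
      ENNReal.ofReal_mul hL]
    ring
  have hT2 : ∫⁻ s in A, ENNReal.ofReal ((t-s)^(p-1)) * (ENNReal.ofReal L * J s)
      = ENNReal.ofReal (L * B)
          * ∫⁻ s in A, ENNReal.ofReal ((t-s)^(p+ρ-1)) * ENNReal.ofReal (f s) := by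
    calc ∫⁻ s in A, ENNReal.ofReal ((t-s)^(p-1)) * (ENNReal.ofReal L * J s)
        = ∫⁻ s in A, ∫⁻ u in A, F (s, u) := by
          refine lintegral_congr_ae ?_
          filter_upwards [self_mem_ae_restrict measurableSet_Ioo] with s hs
          exact hJs s hs
      _ = ∫⁻ u in A, ∫⁻ s in A, F (s, u) := hswap
      _ = ∫⁻ u in A, ENNReal.ofReal L * ENNReal.ofReal (f u)
            * ENNReal.ofReal ((t-u)^(p+ρ-1) * B) := by
          refine lintegral_congr_ae ?_
          filter_upwards [self_mem_ae_restrict measurableSet_Ioo] with u hu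
          exact hinner u hu
      _ = _ := houter
  exact step2.trans (add_le_add hT1 hT2.le)


theorem singular_gronwall_monotone
    (T : ℝ≥0∞) (hT : 0 < T) (L β : ℝ) (hL : 0 ≤ L) (hβ0 : 0 < β) (hβ1 : β < 1)
    (a f : ℝ → ℝ)
    (ha_nonneg : ∀ t : ℝ, 0 ≤ t → ENNReal.ofReal t < T → 0 ≤ a t)
    (hf_nonneg : ∀ t : ℝ, 0 ≤ t → ENNReal.ofReal t < T → 0 ≤ f t)
    (ha_mono : ∀ s t : ℝ, 0 ≤ s → s ≤ t → ENNReal.ofReal t < T → a s ≤ a t)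
    (ha_loc : ∀ b : ℝ, 0 ≤ b → ENNReal.ofReal b < T → IntegrableOn a (Set.Icc 0 b))
    (hf_loc : ∀ b : ℝ, 0 ≤ b → ENNReal.ofReal b < T → IntegrableOn f (Set.Icc 0 b))
    (hyp : ∀ t : ℝ, 0 ≤ t → ENNReal.ofReal t < T →
      f t ≤ a t + L * ∫ s in (0:ℝ)..t, (t - s) ^ (-β) * f s) :
    ∀ t : ℝ, 0 ≤ t → ENNReal.ofReal t < T →
      f t ≤ a t * ∑' n : ℕ,
        (L * Real.Gamma (1 - β) * t ^ (1 - β)) ^ n /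
          Real.Gamma ((n : ℝ) * (1 - β) + 1) := by
  intro t ht hTt
  have hρ0 : 0 < 1 - β := by linarith
  have hρβ : (1 - β) - 1 = -β := by ring
  have hΓρ : 0 < Real.Gamma (1 - β) := Real.Gamma_pos_of_pos hρ0
  set ρ : ℝ := 1 - β with hρ
  set C : ℝ := L * Real.Gamma ρ with hC
  have hC0 : 0 ≤ C := mul_nonneg hL hΓρ.le
  set x : ℝ := C * t ^ ρ with hxdef
  have hx0 : 0 ≤ x := mul_nonneg hC0 (Real.rpow_nonneg ht _)
  have hsum : Summable (fun n : ℕ => x ^ n / Real.Gamma ((n:ℝ) * ρ + 1)) :=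
    summable_ML hρ0 x hx0
  have hterm_nonneg : ∀ n : ℕ, 0 ≤ x ^ n / Real.Gamma ((n:ℝ) * ρ + 1) := by
    intro n
    have := Real.Gamma_pos_of_pos (show (0:ℝ) < (n:ℝ) * ρ + 1 by positivity)
    positivity
  -- degenerate case t = 0
  rcases eq_or_lt_of_le ht with h0 | htpos
  · subst h0
    have hx_eq : x = 0 := by rw [hxdef, Real.zero_rpow hρ0.ne', mul_zero]
    have hE : (∑' n : ℕ, x ^ n / Real.Gamma ((n:ℝ) * ρ + 1)) = 1 := by
      rw [tsum_eq_single 0 (fun n hn => by rw [hx_eq, zero_pow hn, zero_div])]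
      simp [Real.Gamma_one]
    rw [hE, mul_one]
    have := hyp 0 le_rfl hTt
    simpa using this
  -- main case
  have hsT : ∀ s : ℝ, s ≤ t → ENNReal.ofReal s < T :=
    fun s h2 => lt_of_le_of_lt (ENNReal.ofReal_le_ofReal h2) hTt
  have hfm : AEMeasurable f (volume.restrict (Set.Ioo 0 t)) :=
    ((hf_loc t ht hTt).aestronglyMeasurable.aemeasurable).mono_measure
      (Measure.restrict_mono Set.Ioo_subset_Icc_self le_rfl)
  have ham : AEMeasurable a (volume.restrict (Set.Ioo 0 t)) :=
    ((ha_loc t ht hTt).aestronglyMeasurable.aemeasurable).mono_measure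
      (Measure.restrict_mono Set.Ioo_subset_Icc_self le_rfl)
  have hfnn : ∀ s ∈ Set.Ioo 0 t, 0 ≤ f s := fun s hs => hf_nonneg s hs.1.le (hsT s hs.2.le)
  have hfnn' : ∀ s ∈ Set.Icc 0 t, 0 ≤ f s := fun s hs => hf_nonneg s hs.1 (hsT s hs.2)
  have hat : ∀ s ∈ Set.Ioo 0 t, a s ≤ a t := fun s hs => ha_mono s t hs.1.le hs.2.le hTt
  have hat0 : 0 ≤ a t := ha_nonneg t ht hTt
  have hypIoo : ∀ s ∈ Set.Ioo 0 t, f s ≤ a s + L * ∫ u in (0:ℝ)..s, (s-u)^(-β) * f u :=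
    fun s hs => hyp s hs.1.le (hsT s hs.2.le)
  set φ : ℝ → ℝ≥0∞ := fun p => ∫⁻ s in Set.Ioo 0 t,
    ENNReal.ofReal ((t-s)^(p-1)) * ENNReal.ofReal (f s) with hφdef
  have hρβ' : ρ - 1 = -β := by rw [hρ]; ring
  -- base inequality
  have base : ENNReal.ofReal (f t) ≤ ENNReal.ofReal (a t) + ENNReal.ofReal L * φ ρ := by
    have step1 : ENNReal.ofReal (f t) ≤ ENNReal.ofReal (a t)
        + ENNReal.ofReal (L * ∫ u in (0:ℝ)..t, (t-u)^(-β) * f u) :=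
      le_trans (ENNReal.ofReal_le_ofReal (hyp t ht hTt)) ENNReal.ofReal_add_le
    refine step1.trans (add_le_add_right ?_ _)
    rw [ENNReal.ofReal_mul hL]
    refine mul_le_mul_right ?_ _
    rw [intervalIntegral.integral_of_le ht, MeasureTheory.integral_Ioc_eq_integral_Ioo]
    refine (ofReal_integral_le_lintegral _ _).trans_eq ?_
    refine lintegral_congr_ae ?_
    filter_upwards [self_mem_ae_restrict measurableSet_Ioo] with u hu
    rw [show -β = ρ - 1 from hρβ'.symm]
    rw [ENNReal.ofReal_mul (Real.rpow_nonneg (by linarith [hu.2]) _)]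
  -- main induction
  have main : ∀ n : ℕ, ENNReal.ofReal (f t)
      ≤ ENNReal.ofReal (a t * ∑ k ∈ Finset.range (n+1), x^k / Real.Gamma ((k:ℝ)*ρ + 1))
        + ENNReal.ofReal (C^(n+1) / Real.Gamma (((n:ℝ)+1)*ρ)) * φ (((n:ℝ)+1)*ρ) := by
    intro n
    induction n with
    | zero =>
      refine base.trans (le_of_eq ?_)
      rw [show (((0:ℕ):ℝ)+1)*ρ = ρ by push_cast; ring]
      congr 1
      · congr 1
        simp [Real.Gamma_one]
      · congr 1
        rw [show C^(0+1) / Real.Gamma ρ = L by rw [pow_one, hC]; field_simp]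
    | succ n ih =>
      have hp : (0:ℝ) < ((n:ℝ)+1)*ρ := by positivity
      set p : ℝ := ((n:ℝ)+1)*ρ with hp_def
      have hΓp : 0 < Real.Gamma p := Real.Gamma_pos_of_pos hp
      have hΓpρ : 0 < Real.Gamma (p+ρ) := Real.Gamma_pos_of_pos (by positivity)
      have hDnn : (0:ℝ) ≤ C^(n+1) / Real.Gamma p := by positivity
      have hcore := core_step htpos hp hρ0 hρβ' hL hfm ham hfnn hat hat0 hypIoo
      have hx_pow : x^(n+1) = C^(n+1) * t^p := by
        rw [hxdef, mul_pow]
        congr 1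
        rw [← Real.rpow_natCast (t^ρ) (n+1), ← Real.rpow_mul ht]
        congr 1
        push_cast; ring
      have id1 : (C^(n+1)/Real.Gamma p) * (a t * (t^p/p))
          = a t * (x^(n+1)/Real.Gamma (p+1)) := by
        rw [Real.Gamma_add_one hp.ne', hx_pow]
        field_simp
      have id2 : (C^(n+1)/Real.Gamma p)
            * (L * (Real.Gamma p * Real.Gamma ρ / Real.Gamma (p+ρ)))
          = C^(n+2)/Real.Gamma (p+ρ) := by
        rw [show C^(n+2) = C^(n+1) * (L * Real.Gamma ρ) by rw [← hC, pow_succ]]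
        field_simp
      have hterm1 : (0:ℝ) ≤ a t * ∑ k ∈ Finset.range (n+1), x^k / Real.Gamma ((k:ℝ)*ρ + 1) :=
        mul_nonneg hat0 (Finset.sum_nonneg fun k _ => hterm_nonneg k)
      have hterm2 : (0:ℝ) ≤ a t * (x^(n+1)/Real.Gamma (p+1)) := by
        have := Real.Gamma_pos_of_pos (show (0:ℝ) < p + 1 by positivity)
        positivity
      calc ENNReal.ofReal (f t)
          ≤ ENNReal.ofReal (a t * ∑ k ∈ Finset.range (n+1), x^k / Real.Gamma ((k:ℝ)*ρ + 1))
            + ENNReal.ofReal (C^(n+1) / Real.Gamma p) * φ p := ih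
        _ ≤ ENNReal.ofReal (a t * ∑ k ∈ Finset.range (n+1), x^k / Real.Gamma ((k:ℝ)*ρ + 1))
            + ENNReal.ofReal (C^(n+1) / Real.Gamma p)
              * (ENNReal.ofReal (a t * (t^p / p))
                + ENNReal.ofReal (L * (Real.Gamma p * Real.Gamma ρ / Real.Gamma (p + ρ)))
                  * φ (p+ρ)) := by
            refine add_le_add_right (mul_le_mul_right ?_ _) _
            exact hcore
        _ = ENNReal.ofReal (a t * ∑ k ∈ Finset.range (n+1), x^k / Real.Gamma ((k:ℝ)*ρ + 1))
            + (ENNReal.ofReal (a t * (x^(n+1)/Real.Gamma (p+1)))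
              + ENNReal.ofReal (C^(n+2)/Real.Gamma (p+ρ)) * φ (p+ρ)) := by
            rw [mul_add, ← mul_assoc]
            congr 2
            · rw [← ENNReal.ofReal_mul hDnn, id1]
            · rw [← ENNReal.ofReal_mul hDnn, id2]
        _ = ENNReal.ofReal (a t * ∑ k ∈ Finset.range (n+2), x^k / Real.Gamma ((k:ℝ)*ρ + 1))
            + ENNReal.ofReal (C^(n+2)/Real.Gamma (p+ρ)) * φ (p+ρ) := by
            rw [← add_assoc, ← ENNReal.ofReal_add hterm1 hterm2]
            congr 2
            rw [Finset.sum_range_succ (f := fun k => x^k / Real.Gamma ((k:ℝ)*ρ + 1)) (n := n+1),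
              mul_add,
              show Real.Gamma (p+1) = Real.Gamma ((((n+1:ℕ)):ℝ)*ρ+1) by
                rw [show p + 1 = (((n+1:ℕ)):ℝ)*ρ+1 by rw [hp_def]; push_cast; ring]]
        _ = _ := by
            rw [show (((n+1:ℕ):ℝ)+1)*ρ = p + ρ by rw [hp_def]; push_cast; ring]
  -- tail estimate
  set M : ℝ := ∫ s in Set.Icc 0 t, f s with hMdef
  have hM0 : 0 ≤ M := setIntegral_nonneg measurableSet_Icc hfnn'
  have hlintf : ∫⁻ s in Set.Ioo 0 t, ENNReal.ofReal (f s) ≤ ENNReal.ofReal M := by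
    calc ∫⁻ s in Set.Ioo 0 t, ENNReal.ofReal (f s)
        ≤ ∫⁻ s in Set.Icc 0 t, ENNReal.ofReal (f s) :=
          lintegral_mono_set Set.Ioo_subset_Icc_self
      _ = ENNReal.ofReal M := by
          refine (ofReal_integral_eq_lintegral_ofReal (hf_loc t ht hTt) ?_).symm
          filter_upwards [self_mem_ae_restrict measurableSet_Icc] with s hs
          exact hfnn' s hs
  set eps : ℕ → ℝ := fun n =>
    C^(n+1)/Real.Gamma (((n:ℝ)+1)*ρ) * (t^((((n:ℝ)+1)*ρ)-1) * M) with heps_def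
  have freal : ∀ n : ℕ, 1 ≤ ((n:ℝ)+1)*ρ →
      f t ≤ a t * (∑ k ∈ Finset.range (n+1), x^k / Real.Gamma ((k:ℝ)*ρ + 1)) + eps n := by
    intro n hn1
    have hp : (0:ℝ) < ((n:ℝ)+1)*ρ := by positivity
    set p : ℝ := ((n:ℝ)+1)*ρ with hp_def
    have hΓp : 0 < Real.Gamma p := Real.Gamma_pos_of_pos hp
    have hφle : φ p ≤ ENNReal.ofReal (t^(p-1)) * ENNReal.ofReal M := by
      calc φ p ≤ ∫⁻ s in Set.Ioo 0 t, ENNReal.ofReal (t^(p-1)) * ENNReal.ofReal (f s) := by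
            refine lintegral_mono_ae ?_
            filter_upwards [self_mem_ae_restrict measurableSet_Ioo] with s hs
            refine mul_le_mul_left (ENNReal.ofReal_le_ofReal ?_) _
            exact Real.rpow_le_rpow (by linarith [hs.2]) (by linarith [hs.1]) (by linarith)
        _ = ENNReal.ofReal (t^(p-1)) * ∫⁻ s in Set.Ioo 0 t, ENNReal.ofReal (f s) :=
            lintegral_const_mul' _ _ ENNReal.ofReal_ne_top
        _ ≤ _ := mul_le_mul_right hlintf _
    have hDnn : (0:ℝ) ≤ C^(n+1) / Real.Gamma p := by positivity
    have h2 : ENNReal.ofReal (f t)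
        ≤ ENNReal.ofReal (a t * (∑ k ∈ Finset.range (n+1), x^k / Real.Gamma ((k:ℝ)*ρ + 1))
            + eps n) := by
      refine (main n).trans ?_
      have heps_nn : (0:ℝ) ≤ eps n :=
        mul_nonneg (div_nonneg (pow_nonneg hC0 _) hΓp.le)
          (mul_nonneg (Real.rpow_nonneg ht _) hM0)
      rw [ENNReal.ofReal_add (mul_nonneg hat0 (Finset.sum_nonneg fun k _ => hterm_nonneg k))
        heps_nn]
      refine add_le_add_right ?_ _
      calc ENNReal.ofReal (C^(n+1) / Real.Gamma p) * φ p
          ≤ ENNReal.ofReal (C^(n+1) / Real.Gamma p)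
            * (ENNReal.ofReal (t^(p-1)) * ENNReal.ofReal M) := mul_le_mul_right hφle _
        _ = ENNReal.ofReal (eps n) := by
            have he : eps n = C^(n+1)/Real.Gamma p * (t^(p-1) * M) := rfl
            rw [he, ENNReal.ofReal_mul hDnn, ENNReal.ofReal_mul (Real.rpow_nonneg ht _)]
        _ ≤ _ := le_rfl
    have hrhs : 0 ≤ a t * (∑ k ∈ Finset.range (n+1), x^k / Real.Gamma ((k:ℝ)*ρ + 1)) + eps n := by
      have h1 : (0:ℝ) ≤ eps n := by rw [heps_def]; positivity
      have h2' : (0:ℝ) ≤ a t * ∑ k ∈ Finset.range (n+1), x^k / Real.Gamma ((k:ℝ)*ρ+1) :=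
        mul_nonneg hat0 (Finset.sum_nonneg fun k _ => hterm_nonneg k)
      linarith
    exact (ENNReal.ofReal_le_ofReal_iff hrhs).1 h2
  -- pass to the tsum and take limits
  set E : ℝ := ∑' n : ℕ, x ^ n / Real.Gamma ((n:ℝ) * ρ + 1) with hEdef
  have hfE : ∀ n : ℕ, 1 ≤ ((n:ℝ)+1)*ρ → f t ≤ a t * E + eps n := by
    intro n hn
    refine (freal n hn).trans (add_le_add_left ?_ _)
    refine mul_le_mul_of_nonneg_left ?_ hat0
    exact hsum.sum_le_tsum (Finset.range (n+1)) (fun k _ => hterm_nonneg k)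
  have heps0 : Tendsto eps atTop (nhds 0) := by
    have hF := (summable_ML hρ0 (2*x) (by positivity)).tendsto_atTop_zero
    have hF1 : Tendsto (fun n : ℕ => (2*x)^(n+1) / Real.Gamma (((n+1:ℕ):ℝ)*ρ+1)) atTop (nhds 0) :=
      hF.comp (tendsto_add_atTop_nat 1)
    have hg : Tendsto (fun n : ℕ => (ρ * (M/t)) * ((2*x)^(n+1) / Real.Gamma (((n+1:ℕ):ℝ)*ρ+1)))
        atTop (nhds 0) := by
      simpa using hF1.const_mul (ρ * (M/t))
    refine squeeze_zero (fun n => ?_) (fun n => ?_) hg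
    · have hp : (0:ℝ) < ((n:ℝ)+1)*ρ := by positivity
      have hΓp := Real.Gamma_pos_of_pos hp
      exact mul_nonneg (div_nonneg (pow_nonneg hC0 _) hΓp.le)
        (mul_nonneg (Real.rpow_nonneg ht _) hM0)
    · -- eps n ≤ bound
      have hp : (0:ℝ) < ((n:ℝ)+1)*ρ := by positivity
      set p : ℝ := ((n:ℝ)+1)*ρ with hp_def
      have hΓp : 0 < Real.Gamma p := Real.Gamma_pos_of_pos hp
      have hΓp1 : 0 < Real.Gamma (p+1) := Real.Gamma_pos_of_pos (by positivity)
      have hx_pow : x^(n+1) = C^(n+1) * t^p := by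
        rw [hxdef, mul_pow]
        congr 1
        rw [← Real.rpow_natCast (t^ρ) (n+1), ← Real.rpow_mul ht]
        congr 1
        push_cast; ring
      have hteq : t^(p-1) = t^p / t := by
        rw [Real.rpow_sub htpos, Real.rpow_one]
      have heps_eq : eps n = ((n:ℝ)+1)*ρ * x^(n+1) / Real.Gamma (p+1) * (M/t) := by
        show C^(n+1)/Real.Gamma p * (t^(p-1) * M) = _
        rw [Real.Gamma_add_one hp.ne', hx_pow, hteq]
        field_simp
        ring
      rw [heps_eq, show Real.Gamma (((n+1:ℕ):ℝ)*ρ+1) = Real.Gamma (p+1) by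
        rw [hp_def]; push_cast; ring_nf]
      have hbound : ((n:ℝ)+1) * x^(n+1) ≤ (2*x)^(n+1) := by
        have h2n : ((n:ℝ)+1) ≤ 2^(n+1) := by exact_mod_cast (Nat.lt_two_pow_self (n := n+1)).le
        calc ((n:ℝ)+1) * x^(n+1) ≤ 2^(n+1) * x^(n+1) :=
              mul_le_mul_of_nonneg_right h2n (pow_nonneg hx0 _)
          _ = (2*x)^(n+1) := (mul_pow 2 x (n+1)).symm
      have hnum : ((n:ℝ)+1)*ρ * x^(n+1) ≤ ρ * (2*x)^(n+1) := by
        calc ((n:ℝ)+1)*ρ * x^(n+1) = ρ * (((n:ℝ)+1) * x^(n+1)) := by ring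
          _ ≤ ρ * (2*x)^(n+1) := mul_le_mul_of_nonneg_left hbound hρ0.le
      have hc : (0:ℝ) ≤ M / t / Real.Gamma (p+1) :=
        div_nonneg (div_nonneg hM0 htpos.le) hΓp1.le
      calc ((n:ℝ)+1)*ρ * x^(n+1) / Real.Gamma (p+1) * (M/t)
          = (M/t/Real.Gamma (p+1)) * (((n:ℝ)+1)*ρ * x^(n+1)) := by ring
        _ ≤ (M/t/Real.Gamma (p+1)) * (ρ*(2*x)^(n+1)) := mul_le_mul_of_nonneg_left hnum hc
        _ = (ρ * (M/t)) * ((2*x)^(n+1) / Real.Gamma (p+1)) := by ring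
  have hfinal : ∀ᶠ n in atTop, f t ≤ a t * E + eps n := by
    refine eventually_atTop.2 ⟨⌈1/ρ⌉₊, fun n hn => hfE n ?_⟩
    have h1 : (1:ℝ)/ρ ≤ (⌈1/ρ⌉₊ : ℝ) := Nat.le_ceil _
    have h2 : ((⌈1/ρ⌉₊:ℕ):ℝ) ≤ (n:ℝ) := by exact_mod_cast hn
    have h3 : (1:ℝ)/ρ ≤ (n:ℝ) + 1 := by linarith
    calc (1:ℝ) = (1/ρ) * ρ := by field_simp
      _ ≤ ((n:ℝ)+1) * ρ := mul_le_mul_of_nonneg_right h3 hρ0.le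
  have hten : Tendsto (fun n : ℕ => a t * E + eps n) atTop (nhds (a t * E)) := by
    simpa using tendsto_const_nhds.add heps0
  exact ge_of_tendsto hten hfinal
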